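/- arXiv:1708.00958 — 4 statements merged into one kernel-verified Lean document; each statement's English description precedes it below -/
import Mathlib

section
/- Let (Ω, 𝒜, μ) be a probability space and Φ₁, …, Φₘ : Ω → ℝ square-integrable functions that are orthonormal, i.e. ∫_Ω Φᵢ Φⱼ dμ = 1 if i = j and 0 if i ≠ j. Let B : Ω → ℝ^{n×n} be measurable such that every entry of B Φᵢ Φⱼ is μ-integrable for all i, j, and suppose that for μ-almost every ω ∈ Ω the symmetric part B(ω) + B(ω)ᵀ is negative definite. Then the block matrix B̂ ∈ ℝ^{mn×mn} with blocks B̂_{ij} = ∫_Ω B(ω) Φᵢ(ω) Φⱼ(ω) dμ(ω) has a negative definite symmetric part, i.e. zᵀ(B̂ + B̂ᵀ)z < 0 for every nonzero z ∈ ℝ^{mn}. -/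
open Matrix MeasureTheory

private lemma sum_swap4 {α β γ δ M : Type*} [AddCommMonoid M]
    [Fintype α] [Fintype β] [Fintype γ] [Fintype δ]
    (F : α → β → γ → δ → M) :
    ∑ k : β, ∑ l : δ, ∑ i : α, ∑ j : γ, F i k j l
      = ∑ i : α, ∑ k : β, ∑ j : γ, ∑ l : δ, F i k j l := by
  calc ∑ k : β, ∑ l : δ, ∑ i : α, ∑ j : γ, F i k j l
      = ∑ k : β, ∑ i : α, ∑ l : δ, ∑ j : γ, F i k j l :=
        Finset.sum_congr rfl fun k _ => Finset.sum_comm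
    _ = ∑ i : α, ∑ k : β, ∑ l : δ, ∑ j : γ, F i k j l := Finset.sum_comm
    _ = ∑ i : α, ∑ k : β, ∑ j : γ, ∑ l : δ, F i k j l :=
        Finset.sum_congr rfl fun i _ => Finset.sum_congr rfl fun k _ => Finset.sum_comm

/-- If `Φ₁, …, Φₘ` are orthonormal in `L²(μ)` and the symmetric part of `B(ω)`
is negative definite for a.e. `ω`, then the stochastic Galerkin projection
`B̂` (blocks `B̂_{ij} = ∫ B Φᵢ Φⱼ dμ`) has a negative definite symmetric part. -/
theorem stmt_6 (n m : ℕ) {Ω : Type*} [MeasurableSpace Ω]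
    (μ : Measure Ω) [IsProbabilityMeasure μ]
    (Φ : Fin m → Ω → ℝ) (hΦmeas : ∀ i, Measurable (Φ i))
    (hΦL2 : ∀ i, MemLp (Φ i) 2 μ)
    (hΦortho : ∀ i j, ∫ ω, Φ i ω * Φ j ω ∂μ = if i = j then 1 else 0)
    (B : Ω → Matrix (Fin n) (Fin n) ℝ)
    (hBmeas : ∀ k l, Measurable (fun ω => B ω k l))
    (hBint : ∀ i j k l, Integrable (fun ω => B ω k l * Φ i ω * Φ j ω) μ)
    (hBneg : ∀ᵐ ω ∂μ, ∀ z : Fin n → ℝ, z ≠ 0 → z ⬝ᵥ ((B ω + (B ω)ᵀ) *ᵥ z) < 0) :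
    ∀ z : Fin m × Fin n → ℝ, z ≠ 0 →
      (letI Bhat : Matrix (Fin m × Fin n) (Fin m × Fin n) ℝ :=
        Matrix.of (fun p q => ∫ ω, B ω p.2 q.2 * Φ p.1 ω * Φ q.1 ω ∂μ)
       z ⬝ᵥ ((Bhat + Bhatᵀ) *ᵥ z)) < 0 := by
  intro z hz
  classical
  set f : Ω → Fin n → ℝ := fun ω k => ∑ i, z (i, k) * Φ i ω with hf
  set g : Ω → ℝ := fun ω => f ω ⬝ᵥ ((B ω + (B ω)ᵀ) *ᵥ f ω) with hgdef
  -- integrability of Φ i * Φ j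
  have hmul : ∀ i j, Integrable (fun ω => Φ i ω * Φ j ω) μ := by
    intro i j
    have h := (((hΦL2 i).integrable_sq).add ((hΦL2 j).integrable_sq)).const_mul (1/2 : ℝ)
    refine h.mono' ((hΦmeas i).mul (hΦmeas j)).aestronglyMeasurable ?_
    filter_upwards with ω
    have h1 := sq_nonneg (Φ i ω - Φ j ω)
    have h2 := sq_nonneg (Φ i ω + Φ j ω)
    simp only [Pi.add_apply]
    rw [Real.norm_eq_abs, abs_mul]
    rcases abs_cases (Φ i ω) with ⟨hi, _⟩ | ⟨hi, _⟩ <;>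
      rcases abs_cases (Φ j ω) with ⟨hj, _⟩ | ⟨hj, _⟩ <;> rw [hi, hj] <;> nlinarith
  -- integrability of each summand
  have hint : ∀ p q : Fin m × Fin n, Integrable
      (fun ω => z p * z q * ((B ω p.2 q.2 + B ω q.2 p.2) * (Φ p.1 ω * Φ q.1 ω))) μ := by
    intro p q
    apply Integrable.const_mul
    have h := (hBint p.1 q.1 p.2 q.2).add (hBint p.1 q.1 q.2 p.2)
    refine h.congr (Filter.Eventually.of_forall fun ω => ?_)
    simp only [Pi.add_apply]; ring
  -- pointwise expansion of g
  have hg : ∀ ω, g ω = ∑ p : Fin m × Fin n, ∑ q : Fin m × Fin n,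
      z p * z q * ((B ω p.2 q.2 + B ω q.2 p.2) * (Φ p.1 ω * Φ q.1 ω)) := by
    intro ω
    simp only [hgdef, hf, dotProduct, mulVec, Matrix.add_apply, Matrix.transpose_apply,
      Fintype.sum_prod_type]
    rw [← sum_swap4 (fun i k j l => z (i, k) * z (j, l) *
      ((B ω k l + B ω l k) * (Φ i ω * Φ j ω)))]
    refine Finset.sum_congr rfl fun k _ => ?_
    rw [Finset.mul_sum]
    refine Finset.sum_congr rfl fun l _ => ?_
    rw [mul_left_comm, Finset.sum_mul_sum, Finset.mul_sum]
    refine Finset.sum_congr rfl fun i _ => ?_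
    rw [Finset.mul_sum]
    refine Finset.sum_congr rfl fun j _ => ?_
    ring
  have hgint : Integrable g μ := by
    have h := integrable_finset_sum (μ := μ) Finset.univ
      (fun p _ => integrable_finset_sum (μ := μ) Finset.univ (fun q _ => hint p q))
    exact h.congr (Filter.Eventually.of_forall fun ω => (hg ω).symm)
  -- the key identity
  have key : (z ⬝ᵥ (((Matrix.of (fun p q : Fin m × Fin n =>
        ∫ ω, B ω p.2 q.2 * Φ p.1 ω * Φ q.1 ω ∂μ) : Matrix _ _ ℝ) +
        (Matrix.of (fun p q : Fin m × Fin n =>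
        ∫ ω, B ω p.2 q.2 * Φ p.1 ω * Φ q.1 ω ∂μ) : Matrix _ _ ℝ)ᵀ) *ᵥ z))
      = ∫ ω, g ω ∂μ := by
    rw [integral_congr_ae (Filter.Eventually.of_forall hg),
      integral_finset_sum _ (fun p _ => integrable_finset_sum _ (fun q _ => hint p q))]
    simp only [dotProduct, mulVec, Matrix.add_apply, Matrix.transpose_apply, Matrix.of_apply,
      Finset.mul_sum]
    refine Finset.sum_congr rfl fun p _ => ?_
    rw [integral_finset_sum _ (fun q _ => hint p q)]
    refine Finset.sum_congr rfl fun q _ => ?_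
    rw [show (z p * (((∫ ω, B ω p.2 q.2 * Φ p.1 ω * Φ q.1 ω ∂μ) +
        (∫ ω, B ω q.2 p.2 * Φ q.1 ω * Φ p.1 ω ∂μ)) * z q))
      = (z p * z q) * ((∫ ω, B ω p.2 q.2 * Φ p.1 ω * Φ q.1 ω ∂μ) +
        (∫ ω, B ω q.2 p.2 * Φ q.1 ω * Φ p.1 ω ∂μ)) by ring,
      ← integral_add (hBint p.1 q.1 p.2 q.2) ((hBint q.1 p.1 q.2 p.2))]
    rw [← integral_const_mul]
    refine integral_congr_ae (Filter.Eventually.of_forall fun ω => ?_)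
    ring
  rw [key]
  -- nonpositivity a.e.
  have hle : ∀ᵐ ω ∂μ, g ω ≤ 0 := by
    filter_upwards [hBneg] with ω h
    by_cases hfω : f ω = 0
    · simp [hgdef, hfω]
    · exact (h (f ω) hfω).le
  have hineg : ∫ ω, g ω ∂μ ≤ 0 := integral_nonpos_of_ae hle
  rcases hineg.lt_or_eq with hlt | heq
  · exact hlt
  exfalso
  -- g = 0 a.e., hence f = 0 a.e.
  have hg0 : g =ᵐ[μ] 0 := by
    have hnn : 0 ≤ᵐ[μ] fun ω => -g ω := hle.mono fun ω h => by simpa using h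
    have h1 : (fun ω => -g ω) =ᵐ[μ] 0 := by
      refine (integral_eq_zero_iff_of_nonneg_ae hnn hgint.neg).mp ?_
      rw [integral_neg, heq, neg_zero]
    filter_upwards [h1] with ω hω
    simpa using congrArg Neg.neg hω
  have hf0 : ∀ᵐ ω ∂μ, f ω = 0 := by
    filter_upwards [hBneg, hg0] with ω h h0
    by_contra hne
    exact absurd h0 (ne_of_lt (h (f ω) hne))
  -- pick p with z p ≠ 0 and derive contradiction from orthonormality
  obtain ⟨p, hp⟩ := Function.ne_iff.mp hz
  have hzero : ∫ ω, f ω p.2 * Φ p.1 ω ∂μ = 0 := by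
    rw [integral_congr_ae (g := fun _ => (0 : ℝ))]
    · exact integral_zero _ _
    · filter_upwards [hf0] with ω hω
      rw [hω]; simp
  have hval : ∫ ω, f ω p.2 * Φ p.1 ω ∂μ = z p := by
    have : ∀ ω, f ω p.2 * Φ p.1 ω = ∑ i, z (i, p.2) * (Φ i ω * Φ p.1 ω) := by
      intro ω
      simp only [hf, Finset.sum_mul]
      exact Finset.sum_congr rfl fun i _ => by ring
    rw [integral_congr_ae (Filter.Eventually.of_forall this),
      integral_finset_sum _ (fun i _ => (hmul i p.1).const_mul _)]
    simp only [integral_const_mul, hΦortho]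
    simp [Finset.sum_ite_eq', mul_ite]
  rw [hzero] at hval
  exact hp hval.symm
end

section
/- Let (Ω, 𝒜, μ) be a probability space and Φ₁, …, Φₘ : Ω → ℝ square-integrable functions that are orthonormal, i.e. ∫_Ω Φᵢ Φⱼ dμ = 1 if i = j and 0 if i ≠ j. Let B : Ω → ℝ^{n×n} be measurable such that every entry of B Φᵢ Φⱼ is μ-integrable for all i, j, and suppose that for μ-almost every ω ∈ Ω the symmetric part B(ω) + B(ω)ᵀ is negative definite. Then the block matrix B̂ ∈ ℝ^{mn×mn} with blocks B̂_{ij} = ∫_Ω B(ω) Φᵢ(ω) Φⱼ(ω) dμ(ω) is a stable matrix, i.e. every eigenvalue λ ∈ ℂ of B̂ satisfies Re λ < 0. -/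
open Matrix MeasureTheory
open scoped ENNReal

section Aux

variable {n m : ℕ} {Ω : Type*} [MeasurableSpace Ω] {μ : Measure Ω}

def auxEquiv (n m : ℕ) :
    (Fin n × Fin n × Fin m × Fin m) ≃ ((Fin m × Fin n) × (Fin m × Fin n)) where
  toFun r := ((r.2.2.2, r.1), (r.2.2.1, r.2.1))
  invFun s := (s.1.2, s.2.2, s.2.1, s.1.1)
  left_inv r := rfl
  right_inv s := rfl

lemma aux_pointwise (B : Ω → Matrix (Fin n) (Fin n) ℝ) (Φ : Fin m → Ω → ℝ)
    (z : Fin m × Fin n → ℝ) (ω : Ω) :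
    (fun k => ∑ i : Fin m, z (i, k) * Φ i ω) ⬝ᵥ
        (B ω *ᵥ fun k => ∑ i : Fin m, z (i, k) * Φ i ω) =
      ∑ p : Fin m × Fin n, ∑ q : Fin m × Fin n,
        z p * z q * (B ω p.2 q.2 * Φ p.1 ω * Φ q.1 ω) := by
  calc (fun k => ∑ i : Fin m, z (i, k) * Φ i ω) ⬝ᵥ
        (B ω *ᵥ fun k => ∑ i : Fin m, z (i, k) * Φ i ω)
      = ∑ r : Fin n × Fin n × Fin m × Fin m,
          (z (r.2.2.2, r.1) * Φ r.2.2.2 ω) *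
            (B ω r.1 r.2.1 * (z (r.2.2.1, r.2.1) * Φ r.2.2.1 ω)) := by
        simp only [dotProduct, mulVec, Finset.sum_mul, Finset.mul_sum, Fintype.sum_prod_type]
    _ = ∑ s : (Fin m × Fin n) × (Fin m × Fin n),
          z s.1 * z s.2 * (B ω s.1.2 s.2.2 * Φ s.1.1 ω * Φ s.2.1 ω) :=
        Fintype.sum_equiv (auxEquiv n m) _ _ (fun r => by simp [auxEquiv]; ring)
    _ = ∑ p : Fin m × Fin n, ∑ q : Fin m × Fin n,
          z p * z q * (B ω p.2 q.2 * Φ p.1 ω * Φ q.1 ω) := Fintype.sum_prod_type _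

lemma aux_quad (μ : Measure Ω) [IsProbabilityMeasure μ]
    (Φ : Fin m → Ω → ℝ)
    (hΦL2 : ∀ i, MemLp (Φ i) 2 μ)
    (hΦortho : ∀ i j, ∫ ω, Φ i ω * Φ j ω ∂μ = if i = j then 1 else 0)
    (B : Ω → Matrix (Fin n) (Fin n) ℝ)
    (hBint : ∀ i j k l, Integrable (fun ω => B ω k l * Φ i ω * Φ j ω) μ)
    (hBneg : ∀ᵐ ω ∂μ, ∀ z : Fin n → ℝ, z ≠ 0 → z ⬝ᵥ ((B ω + (B ω)ᵀ) *ᵥ z) < 0)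
    (z : Fin m × Fin n → ℝ) (hz : z ≠ 0) :
    z ⬝ᵥ ((Matrix.of (fun p q : Fin m × Fin n =>
        ∫ ω, B ω p.2 q.2 * Φ p.1 ω * Φ q.1 ω ∂μ)) *ᵥ z) < 0 := by
  classical
  set w : Ω → Fin n → ℝ := fun ω k => ∑ i : Fin m, z (i, k) * Φ i ω with hw
  set f : Ω → ℝ := fun ω => w ω ⬝ᵥ (B ω *ᵥ w ω) with hf
  have h12 : (1 : ℝ≥0∞) / 1 = 1 / 2 + 1 / 2 := by
    rw [ENNReal.add_halves]; simp
  have hmul : ∀ i j : Fin m, Integrable (fun ω => Φ i ω * Φ j ω) μ := by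
    intro i j
    exact memLp_one_iff_integrable.mp ((hΦL2 j).smul (φ := Φ i) (hΦL2 i) (hpqr := ⟨by simpa only [one_div] using h12.symm⟩))
  have hfint : Integrable f μ := by
    have : f = fun ω => ∑ p : Fin m × Fin n, ∑ q : Fin m × Fin n,
        z p * z q * (B ω p.2 q.2 * Φ p.1 ω * Φ q.1 ω) := by
      funext ω; exact aux_pointwise B Φ z ω
    rw [this]
    exact integrable_finset_sum _ fun p _ => integrable_finset_sum _ fun q _ =>
      ((hBint p.1 q.1 p.2 q.2).const_mul _)
  have hid : z ⬝ᵥ ((Matrix.of (fun p q : Fin m × Fin n =>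
      ∫ ω, B ω p.2 q.2 * Φ p.1 ω * Φ q.1 ω ∂μ)) *ᵥ z) = ∫ ω, f ω ∂μ := by
    have h1 : ∀ p : Fin m × Fin n, Integrable (fun ω => ∑ q : Fin m × Fin n,
        z p * z q * (B ω p.2 q.2 * Φ p.1 ω * Φ q.1 ω)) μ :=
      fun p => integrable_finset_sum _ fun q _ => ((hBint p.1 q.1 p.2 q.2).const_mul _)
    calc z ⬝ᵥ ((Matrix.of (fun p q : Fin m × Fin n =>
        ∫ ω, B ω p.2 q.2 * Φ p.1 ω * Φ q.1 ω ∂μ)) *ᵥ z)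
        = ∑ p : Fin m × Fin n, ∑ q : Fin m × Fin n,
            ∫ ω, z p * z q * (B ω p.2 q.2 * Φ p.1 ω * Φ q.1 ω) ∂μ := by
          simp only [dotProduct, mulVec, of_apply, Finset.mul_sum]
          refine Finset.sum_congr rfl fun p _ => Finset.sum_congr rfl fun q _ => ?_
          rw [integral_const_mul, ← mul_assoc]
          ring_nf
      _ = ∫ ω, ∑ p : Fin m × Fin n, ∑ q : Fin m × Fin n,
            z p * z q * (B ω p.2 q.2 * Φ p.1 ω * Φ q.1 ω) ∂μ := by
          rw [integral_finset_sum _ fun p _ => h1 p]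
          exact Finset.sum_congr rfl fun p _ => (integral_finset_sum _ fun q _ =>
            ((hBint p.1 q.1 p.2 q.2).const_mul _)).symm
      _ = ∫ ω, f ω ∂μ := by
          refine integral_congr_ae (Filter.Eventually.of_forall fun ω => ?_)
          exact (aux_pointwise B Φ z ω).symm
  have hae : ∀ᵐ ω ∂μ, f ω ≤ 0 ∧ (f ω = 0 → w ω = 0) := by
    filter_upwards [hBneg] with ω hω
    have hsym : w ω ⬝ᵥ ((B ω + (B ω)ᵀ) *ᵥ w ω) = 2 * f ω := by
      rw [add_mulVec, dotProduct_add, dotProduct_mulVec (w ω) (B ω)ᵀ,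
        vecMul_transpose, dotProduct_comm]
      simp only [hf]
      rw [dotProduct_comm]
      ring
    by_cases hwz : w ω = 0
    · refine ⟨by simp [hf, hwz], fun _ => hwz⟩
    · have hlt := hω (w ω) hwz
      rw [hsym] at hlt
      exact ⟨by linarith, fun h0 => by rw [h0] at hlt; norm_num at hlt⟩
  rw [hid]
  have hle : ∫ ω, f ω ∂μ ≤ 0 :=
    integral_nonpos_of_ae (hae.mono fun ω h => h.1)
  rcases lt_or_eq_of_le hle with h | h
  · exact h
  exfalso
  have hnegf : 0 ≤ᵐ[μ] fun ω => -f ω := hae.mono fun ω hω => by simpa using hω.1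
  have hzero : (fun ω => -f ω) =ᵐ[μ] 0 := by
    refine (integral_eq_zero_iff_of_nonneg_ae hnegf hfint.neg).mp ?_
    rw [integral_neg, h, neg_zero]
  have hwzero : ∀ᵐ ω ∂μ, w ω = 0 := by
    filter_upwards [hae, hzero] with ω hω h0
    exact hω.2 (by simpa using (neg_eq_zero.mp h0))
  apply hz
  funext p
  obtain ⟨j, k⟩ := p
  have h1 : ∫ ω, w ω k * Φ j ω ∂μ = 0 := by
    have he : (fun ω => w ω k * Φ j ω) =ᵐ[μ] 0 :=
      hwzero.mono fun ω h => by show w ω k * Φ j ω = (0 : Ω → ℝ) ω; rw [h]; simp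
    rw [integral_congr_ae he]; simp
  have h2 : ∫ ω, w ω k * Φ j ω ∂μ = z (j, k) := by
    have he : (fun ω => w ω k * Φ j ω) =
        fun ω => ∑ i : Fin m, z (i, k) * (Φ i ω * Φ j ω) := by
      funext ω
      simp only [hw, Finset.sum_mul]
      exact Finset.sum_congr rfl fun i _ => by ring
    rw [he, integral_finset_sum _ fun i _ => (hmul i j).const_mul _]
    simp only [integral_const_mul, hΦortho]
    simp
  rw [h1] at h2
  simp [← h2]

end Aux

/-- If `Φ₁, …, Φₘ` are orthonormal in `L²(μ)` and the symmetric part of `B(ω)`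
is negative definite for a.e. `ω`, then the stochastic Galerkin projection
`B̂` (blocks `B̂_{ij} = ∫ B Φᵢ Φⱼ dμ`) is a stable matrix: every complex
eigenvalue of `B̂` has negative real part. -/
theorem stmt_7 (n m : ℕ) {Ω : Type*} [MeasurableSpace Ω]
    (μ : Measure Ω) [IsProbabilityMeasure μ]
    (Φ : Fin m → Ω → ℝ) (hΦmeas : ∀ i, Measurable (Φ i))
    (hΦL2 : ∀ i, MemLp (Φ i) 2 μ)
    (hΦortho : ∀ i j, ∫ ω, Φ i ω * Φ j ω ∂μ = if i = j then 1 else 0)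
    (B : Ω → Matrix (Fin n) (Fin n) ℝ)
    (hBmeas : ∀ k l, Measurable (fun ω => B ω k l))
    (hBint : ∀ i j k l, Integrable (fun ω => B ω k l * Φ i ω * Φ j ω) μ)
    (hBneg : ∀ᵐ ω ∂μ, ∀ z : Fin n → ℝ, z ≠ 0 → z ⬝ᵥ ((B ω + (B ω)ᵀ) *ᵥ z) < 0) :
    ∀ lam : ℂ,
      lam ∈ spectrum ℂ
        ((Matrix.of (fun p q : Fin m × Fin n =>
          ∫ ω, B ω p.2 q.2 * Φ p.1 ω * Φ q.1 ω ∂μ)).map (Complex.ofReal : ℝ → ℂ)) →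
      lam.re < 0 := by
  classical
  intro lam hlam
  set A : Matrix (Fin m × Fin n) (Fin m × Fin n) ℝ :=
    Matrix.of (fun p q : Fin m × Fin n => ∫ ω, B ω p.2 q.2 * Φ p.1 ω * Φ q.1 ω ∂μ) with hA
  have hquad : ∀ z : Fin m × Fin n → ℝ, z ≠ 0 → z ⬝ᵥ (A *ᵥ z) < 0 :=
    fun z hz => aux_quad μ Φ hΦL2 hΦortho B hBint hBneg z hz
  have hquad0 : ∀ z : Fin m × Fin n → ℝ, z ⬝ᵥ (A *ᵥ z) ≤ 0 := by
    intro z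
    by_cases hz : z = 0
    · subst hz; simp
    · exact (hquad z hz).le
  rw [spectrum.mem_iff] at hlam
  set M : Matrix (Fin m × Fin n) (Fin m × Fin n) ℂ := A.map (Complex.ofReal) with hM
  have hdet : (algebraMap ℂ (Matrix (Fin m × Fin n) (Fin m × Fin n) ℂ) lam - M).det = 0 := by
    by_contra hd
    exact hlam ((Matrix.isUnit_iff_isUnit_det _).mpr (isUnit_iff_ne_zero.mpr hd))
  obtain ⟨v, hv0, hv⟩ := (Matrix.exists_mulVec_eq_zero_iff).mpr hdet
  have hMv : M *ᵥ v = lam • v := by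
    have h1 : (algebraMap ℂ (Matrix (Fin m × Fin n) (Fin m × Fin n) ℂ) lam - M) *ᵥ v
        = lam • v - M *ᵥ v := by
      rw [sub_mulVec]
      congr 1
      rw [Algebra.algebraMap_eq_smul_one, smul_mulVec, one_mulVec]
    rw [h1] at hv
    exact (sub_eq_zero.mp hv).symm
  set x : Fin m × Fin n → ℝ := fun p => (v p).re with hx
  set y : Fin m × Fin n → ℝ := fun p => (v p).im with hy
  have hre : (star v ⬝ᵥ (M *ᵥ v)).re = x ⬝ᵥ (A *ᵥ x) + y ⬝ᵥ (A *ᵥ y) := by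
    have step1 : (star v ⬝ᵥ (M *ᵥ v)).re
        = ∑ p : Fin m × Fin n, ∑ q : Fin m × Fin n,
            A p q * (x p * x q + y p * y q) := by
      simp only [dotProduct, mulVec, Pi.star_apply, Matrix.map_apply, hM]
      rw [Complex.re_sum]
      refine Finset.sum_congr rfl fun p _ => ?_
      rw [Finset.mul_sum, Complex.re_sum]
      refine Finset.sum_congr rfl fun q _ => ?_
      simp only [Complex.mul_re, Complex.mul_im, Complex.conj_re, Complex.conj_im,
        Complex.ofReal_re, Complex.ofReal_im, RingHom.coe_coe, Complex.star_def]
      ring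
    rw [step1]
    simp only [dotProduct, mulVec, Finset.mul_sum, ← Finset.sum_add_distrib]
    refine Finset.sum_congr rfl fun p _ => ?_
    refine Finset.sum_congr rfl fun q _ => ?_
    ring
  have hvv_re : (star v ⬝ᵥ v).re = ∑ p : Fin m × Fin n, (x p * x p + y p * y p) := by
    simp only [dotProduct, Pi.star_apply]
    rw [Complex.re_sum]
    refine Finset.sum_congr rfl fun p _ => ?_
    simp only [Complex.mul_re, Complex.conj_re, Complex.conj_im, Complex.star_def]
    ring
  have hvv_im : (star v ⬝ᵥ v).im = 0 := by
    simp only [dotProduct, Pi.star_apply]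
    rw [Complex.im_sum]
    refine Finset.sum_eq_zero fun p _ => ?_
    simp only [Complex.mul_im, Complex.conj_re, Complex.conj_im, Complex.star_def]
    ring
  have hc_pos : 0 < ∑ p : Fin m × Fin n, (x p * x p + y p * y p) := by
    obtain ⟨p0, hp0⟩ : ∃ p, v p ≠ 0 := by
      by_contra hcon
      push_neg at hcon
      exact hv0 (funext hcon)
    refine Finset.sum_pos' (fun p _ => add_nonneg (mul_self_nonneg _) (mul_self_nonneg _)) ⟨p0, Finset.mem_univ p0, ?_⟩
    have : x p0 ≠ 0 ∨ y p0 ≠ 0 := by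
      by_contra hcon
      push_neg at hcon
      exact hp0 (Complex.ext hcon.1 hcon.2)
    rcases this with h | h
    · nlinarith [mul_self_nonneg (y p0), mul_self_pos.mpr h]
    · nlinarith [mul_self_nonneg (x p0), mul_self_pos.mpr h]
  have heig : (star v ⬝ᵥ (M *ᵥ v)).re
      = lam.re * ∑ p : Fin m × Fin n, (x p * x p + y p * y p) := by
    rw [hMv]
    have : star v ⬝ᵥ (lam • v) = lam * (star v ⬝ᵥ v) := by
      simp [dotProduct, Finset.mul_sum, smul_eq_mul]
      exact Finset.sum_congr rfl fun p _ => by ring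
    rw [this, Complex.mul_re, hvv_re, hvv_im]
    ring
  have hneg : x ⬝ᵥ (A *ᵥ x) + y ⬝ᵥ (A *ᵥ y) < 0 := by
    have hxy : x ≠ 0 ∨ y ≠ 0 := by
      by_contra hcon
      push_neg at hcon
      apply hv0
      funext p
      have hxp : x p = 0 := by rw [hcon.1]; rfl
      have hyp : y p = 0 := by rw [hcon.2]; rfl
      exact Complex.ext hxp hyp
    rcases hxy with h | h
    · linarith [hquad x h, hquad0 y]
    · linarith [hquad0 x, hquad y h]
  rw [heig] at hre
  nlinarith [hc_pos, hre, hneg]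
end

section
/- Let U ⊆ ℝ^q be an open set, ℓ ∈ ℕ, and A, Q : U → ℝ^{n×n} matrix-valued functions all of whose entries are ℓ-times continuously differentiable on U. Suppose that for every p ∈ U the matrix A(p) is stable and Q(p) is symmetric positive definite. Then there exists a matrix-valued function M : U → ℝ^{n×n}, all of whose entries are ℓ-times continuously differentiable on U, such that for every p ∈ U, M(p) is symmetric positive definite and satisfies the Lyapunov equation A(p)ᵀ M(p) + M(p) A(p) + Q(p) = 0. -/
set_option maxRecDepth 8000
set_option maxHeartbeats 1000000

open Matrix Polynomial NormedSpace Filter Topology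

lemma eval_charpoly' {m : Type*} [Fintype m] [DecidableEq m] {K : Type*} [CommRing K]
    (M : Matrix m m K) (t : K) : (M.charpoly).eval t = (t • (1 : Matrix m m K) - M).det := by
  rw [Matrix.charpoly, ← Polynomial.coe_evalRingHom, RingHom.map_det]
  congr 1
  ext i j
  by_cases h : i = j
  · subst h; simp [charmatrix_apply_eq, Matrix.one_apply]
  · simp [charmatrix_apply_ne _ _ _ h, Matrix.one_apply, h]

lemma mem_spectrum_iff_det {m : Type*} [Fintype m] [DecidableEq m] {K : Type*} [Field K]
    (M : Matrix m m K) (t : K) :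
    t ∈ spectrum K M ↔ (t • (1 : Matrix m m K) - M).det = 0 := by
  rw [spectrum.mem_iff, Matrix.isUnit_iff_isUnit_det, isUnit_iff_ne_zero, not_not,
    Algebra.algebraMap_eq_smul_one]

lemma spectrum_transpose_mem {m : Type*} [Fintype m] [DecidableEq m] {K : Type*} [Field K]
    (M : Matrix m m K) (t : K) (h : t ∈ spectrum K Mᵀ) : t ∈ spectrum K M := by
  rw [mem_spectrum_iff_det] at h ⊢
  rw [← Matrix.det_transpose]
  simpa [Matrix.transpose_sub, Matrix.transpose_smul] using h

/-- Uniqueness for the complex Sylvester/Lyapunov equation. -/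
lemma lyap_uniq_complex {N : ℕ} (B : Matrix (Fin N) (Fin N) ℂ)
    (hB : ∀ lam ∈ spectrum ℂ B, lam.re < 0)
    (M : Matrix (Fin N) (Fin N) ℂ) (h : Bᵀ * M + M * B = 0) : M = 0 := by
  rcases Nat.eq_zero_or_pos N with hN | hN
  · subst hN; exact Subsingleton.elim _ _
  haveI : NeZero N := ⟨hN.ne'⟩
  -- intertwining
  have hMB : M * B = (-Bᵀ) * M := by
    have h2 : M * B = -(Bᵀ * M) := by
      rw [eq_neg_iff_add_eq_zero, add_comm]; exact h
    rw [h2, Matrix.neg_mul]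
  have hpow : ∀ k : ℕ, M * B ^ k = (-Bᵀ) ^ k * M := by
    intro k
    induction k with
    | zero => simp
    | succ k ih =>
      rw [pow_succ, pow_succ', ← mul_assoc, ih, mul_assoc, hMB, ← mul_assoc,
        ← pow_succ, ← pow_succ']
  have haeval : ∀ p : ℂ[X], M * aeval B p = aeval (-Bᵀ) p * M := by
    intro p
    induction p using Polynomial.induction_on' with
    | add p q hp hq => rw [map_add, map_add, mul_add, add_mul, hp, hq]
    | monomial k a =>
      rw [aeval_monomial, aeval_monomial, Algebra.algebraMap_eq_smul_one]
      simp only [Algebra.smul_mul_assoc, one_mul, Algebra.mul_smul_comm]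
      rw [hpow k]
  have hch : aeval (-Bᵀ) (Matrix.charpoly B) * M = 0 := by
    rw [← haeval, Matrix.aeval_self_charpoly, mul_zero]
  have hunit : IsUnit (aeval (-Bᵀ) (Matrix.charpoly B)) := by
    by_contra hn
    have h0 : (0 : ℂ) ∈ spectrum ℂ (aeval (-Bᵀ) (Matrix.charpoly B)) :=
      (spectrum.zero_mem_iff ℂ).mpr hn
    have hne : (spectrum ℂ (-Bᵀ)).Nonempty :=
      spectrum.nonempty_of_isAlgClosed_of_finiteDimensional ℂ (-Bᵀ)
    rw [spectrum.map_polynomial_aeval_of_nonempty _ _ hne] at h0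
    obtain ⟨μ, hμmem, hμeval⟩ := h0
    -- μ ∈ spectrum (-Bᵀ) gives Re μ > 0
    have hμ1 : -μ ∈ spectrum ℂ B := by
      apply spectrum_transpose_mem
      rw [mem_spectrum_iff_det] at hμmem ⊢
      have : ((-μ) • (1 : Matrix (Fin N) (Fin N) ℂ) - Bᵀ) = -(μ • 1 - (-Bᵀ)) := by
        ext i j; simp [Matrix.one_apply]; ring
      rw [this, Matrix.det_neg, hμmem, mul_zero]
    have hre1 : 0 < μ.re := by
      have := hB _ hμ1
      simpa using this
    -- eval μ charpoly = 0 gives Re μ < 0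
    have hμ2 : μ ∈ spectrum ℂ B := by
      rw [mem_spectrum_iff_det, ← eval_charpoly' B μ]
      exact hμeval
    exact absurd (hB _ hμ2) (by linarith)
  obtain ⟨u, hu⟩ := hunit
  calc M = ↑u⁻¹ * (↑u * M) := by rw [← mul_assoc, Units.inv_mul, one_mul]
  _ = 0 := by rw [hu, hch, mul_zero]

section
variable {N : ℕ}

/-- Uniqueness for the real Lyapunov equation, given stability of the complexification. -/
lemma lyap_uniq_real (A : Matrix (Fin N) (Fin N) ℝ)
    (hA : ∀ lam ∈ spectrum ℂ (A.map (Complex.ofReal : ℝ → ℂ)), lam.re < 0)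
    (M : Matrix (Fin N) (Fin N) ℝ) (h : Aᵀ * M + M * A = 0) : M = 0 := by
  have hmap : ∀ X Y : Matrix (Fin N) (Fin N) ℝ,
      (X * Y).map (Complex.ofReal : ℝ → ℂ) = X.map Complex.ofReal * Y.map Complex.ofReal :=
    fun X Y => by
      ext i j
      simp [Matrix.mul_apply, Matrix.map_apply]
  have heq : (A.map (Complex.ofReal : ℝ → ℂ))ᵀ * M.map Complex.ofReal
      + M.map Complex.ofReal * A.map Complex.ofReal = 0 := by
    ext i j
    have h0 : (Aᵀ * M + M * A) i j = 0 := by rw [h]; rfl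
    simp only [Matrix.add_apply, Matrix.mul_apply, Matrix.transpose_apply,
      Matrix.map_apply, Matrix.zero_apply] at h0 ⊢
    push_cast
    exact_mod_cast congrArg (Complex.ofReal : ℝ → ℂ) h0
  have key : M.map (Complex.ofReal : ℝ → ℂ) = 0 :=
    lyap_uniq_complex (A.map Complex.ofReal) hA (M.map Complex.ofReal) heq
  ext i j
  have := congrFun (congrFun key i) j
  simpa [Matrix.map_apply] using this

/-- The Sylvester matrix of `A`, acting on vectorized matrices. -/
def sylv (A : Matrix (Fin N) (Fin N) ℝ) :
    Matrix (Fin N × Fin N) (Fin N × Fin N) ℝ :=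
  fun x y => A y.1 x.1 * (if y.2 = x.2 then 1 else 0) + (if x.1 = y.1 then 1 else 0) * A y.2 x.2

lemma sylv_mulVec (A M : Matrix (Fin N) (Fin N) ℝ) (x : Fin N × Fin N) :
    (sylv A *ᵥ (fun y => M y.1 y.2)) x = (Aᵀ * M + M * A) x.1 x.2 := by
  obtain ⟨i, j⟩ := x
  simp only [sylv, Matrix.mulVec, dotProduct, Matrix.add_apply, Matrix.mul_apply,
    Matrix.transpose_apply, Fintype.sum_prod_type, add_mul]
  simp only [Finset.sum_add_distrib]
  congr 1
  · apply Finset.sum_congr rfl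
    intro k _
    rw [Finset.sum_eq_single j] <;> simp +contextual [eq_comm]
  · rw [Finset.sum_eq_single i]
    · apply Finset.sum_congr rfl
      intro l _
      simp [mul_comm]
    · intro k _ hk
      simp [Ne.symm hk]
    · simp

end

variable {E : Type*} [NormedAddCommGroup E] [NormedSpace ℝ E] {U : Set E} {ν : WithTop ℕ∞}

lemma contDiffOn_finset_prod {ι : Type*} (s : Finset ι) (f : ι → E → ℝ)
    (h : ∀ i ∈ s, ContDiffOn ℝ ν (f i) U) :
    ContDiffOn ℝ ν (fun p => ∏ i ∈ s, f i p) U := by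
  classical
  induction s using Finset.induction with
  | empty => simpa using contDiffOn_const
  | insert _ _ hi ih =>
    rename_i a s'
    simp only [Finset.prod_insert hi]
    exact (h a (Finset.mem_insert_self a s')).mul
      (ih fun i his => h i (Finset.mem_insert_of_mem his))

lemma contDiffOn_det' {m : Type*} [Fintype m] [DecidableEq m] (B : E → Matrix m m ℝ)
    (h : ∀ i j, ContDiffOn ℝ ν (fun p => B p i j) U) :
    ContDiffOn ℝ ν (fun p => (B p).det) U := by
  have hrw : (fun p => (B p).det)
      = fun p => ∑ σ : Equiv.Perm m, ((Equiv.Perm.sign σ : ℤ) : ℝ) * ∏ i, B p (σ i) i := by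
    funext p; rw [Matrix.det_apply']
  rw [hrw]
  apply ContDiffOn.sum
  intro σ _
  exact contDiffOn_const.mul (contDiffOn_finset_prod _ _ fun i _ => h (σ i) i)

lemma contDiffOn_adjugate {m : Type*} [Fintype m] [DecidableEq m] (B : E → Matrix m m ℝ)
    (h : ∀ i j, ContDiffOn ℝ ν (fun p => B p i j) U) (i j : m) :
    ContDiffOn ℝ ν (fun p => (B p).adjugate i j) U := by
  have hrw : (fun p => (B p).adjugate i j)
      = fun p => ((B p).updateRow j (Pi.single i 1)).det := by
    funext p; rw [Matrix.adjugate_apply]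
  rw [hrw]
  apply contDiffOn_det'
  intro k l
  by_cases hk : k = j
  · subst hk; simpa [Matrix.updateRow_apply] using contDiffOn_const
  · simpa [Matrix.updateRow_apply, hk] using h k l

variable {N : ℕ}

section eig

lemma exp_mulVec_eigen (B : Matrix (Fin N) (Fin N) ℂ) (w : Fin N → ℂ) (lam : ℂ)
    (hw : B *ᵥ w = lam • w) : (exp B) *ᵥ w = Complex.exp lam • w := by
  letI : SeminormedRing (Matrix (Fin N) (Fin N) ℂ) := Matrix.linftyOpSemiNormedRing
  letI : NormedRing (Matrix (Fin N) (Fin N) ℂ) := Matrix.linftyOpNormedRing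
  letI : NormedAlgebra ℂ (Matrix (Fin N) (Fin N) ℂ) := Matrix.linftyOpNormedAlgebra
  have hpow : ∀ k : ℕ, B ^ k *ᵥ w = lam ^ k • w := by
    intro k
    induction k with
    | zero => simp
    | succ k ih =>
      rw [pow_succ', ← Matrix.mulVec_mulVec, ih, Matrix.mulVec_smul, hw, smul_smul, ← pow_succ]
  let L : Matrix (Fin N) (Fin N) ℂ →ₗ[ℂ] (Fin N → ℂ) :=
    { toFun := fun X => X *ᵥ w
      map_add' := fun X Y => Matrix.add_mulVec X Y w
      map_smul' := fun a X => Matrix.smul_mulVec a X w }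
  let Lc : Matrix (Fin N) (Fin N) ℂ →L[ℂ] (Fin N → ℂ) := ⟨L, L.continuous_of_finiteDimensional⟩
  have hsum : Summable fun k : ℕ => ((k.factorial : ℂ))⁻¹ • B ^ k :=
    NormedSpace.expSeries_summable' (𝕂 := ℂ) B
  have h1 : (exp B) *ᵥ w = ∑' k : ℕ, ((k.factorial : ℂ))⁻¹ • (B ^ k *ᵥ w) := by
    have : (exp B) *ᵥ w = Lc (exp B) := rfl
    rw [this, exp_eq_tsum ℂ, Lc.map_tsum hsum]
    simp [Lc, L]
  rw [h1]
  have h2 : ∀ k : ℕ, ((k.factorial : ℂ))⁻¹ • (B ^ k *ᵥ w)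
      = (((k.factorial : ℂ))⁻¹ * lam ^ k) • w := by
    intro k; rw [hpow k, smul_smul]
  simp_rw [h2]
  rw [Summable.tsum_smul_const]
  · congr 1
    rw [Complex.exp_eq_exp_ℂ, exp_eq_tsum ℂ]
    simp [smul_eq_mul]
  · have := NormedSpace.expSeries_summable' (𝕂 := ℂ) lam
    simpa [smul_eq_mul] using this

lemma spectrum_exp_norm_lt (B : Matrix (Fin N) (Fin N) ℂ)
    (hB : ∀ lam ∈ spectrum ℂ B, lam.re < 0)
    (μ : ℂ) (hμ : μ ∈ spectrum ℂ (exp B)) : ‖μ‖ < 1 := by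
  have hdet : (μ • (1 : Matrix (Fin N) (Fin N) ℂ) - exp B).det = 0 :=
    (mem_spectrum_iff_det _ _).mp hμ
  obtain ⟨v, hv0, hv⟩ := (Matrix.exists_mulVec_eq_zero_iff).mpr hdet
  have hev : (exp B) *ᵥ v = μ • v := by
    have := hv
    rw [Matrix.sub_mulVec, sub_eq_zero, Matrix.smul_mulVec, Matrix.one_mulVec] at this
    exact this.symm
  -- the eigenspace of exp B for μ
  let f : Module.End ℂ (Fin N → ℂ) := Matrix.mulVecLin (exp B)
  let W : Submodule ℂ (Fin N → ℂ) := Module.End.eigenspace f μ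
  have hvW : v ∈ W := by
    rw [Module.End.mem_eigenspace_iff]
    exact hev
  haveI : Nontrivial W :=
    ⟨⟨⟨v, hvW⟩, 0, fun h => hv0 (congrArg Subtype.val h)⟩⟩
  -- B preserves W
  have hcomm : B * exp B = exp B * B := by
    letI : SeminormedRing (Matrix (Fin N) (Fin N) ℂ) := Matrix.linftyOpSemiNormedRing
    letI : NormedRing (Matrix (Fin N) (Fin N) ℂ) := Matrix.linftyOpNormedRing
    letI : NormedAlgebra ℂ (Matrix (Fin N) (Fin N) ℂ) := Matrix.linftyOpNormedAlgebra
    exact ((Commute.refl B).exp_right)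
  have hinv : ∀ w ∈ W, (Matrix.mulVecLin B) w ∈ W := by
    intro w hw
    have hw' : (exp B) *ᵥ w = μ • w := Module.End.mem_eigenspace_iff.mp hw
    apply Module.End.mem_eigenspace_iff.mpr
    show (exp B) *ᵥ (B *ᵥ w) = μ • (B *ᵥ w)
    rw [Matrix.mulVec_mulVec, ← hcomm, ← Matrix.mulVec_mulVec, hw', Matrix.mulVec_smul]
  let g : Module.End ℂ W := (Matrix.mulVecLin B).restrict hinv
  obtain ⟨lam, hlam⟩ := Module.End.exists_eigenvalue g
  obtain ⟨w', hw'⟩ := hlam.exists_hasEigenvector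
  have hw'0 : (w' : Fin N → ℂ) ≠ 0 := fun hcon => hw'.2 (Subtype.ext hcon)
  have hBw : B *ᵥ (w' : Fin N → ℂ) = lam • (w' : Fin N → ℂ) := by
    have h1 : (↑(g w') : Fin N → ℂ) = B *ᵥ (w' : Fin N → ℂ) := rfl
    have h2 : (↑(lam • w') : Fin N → ℂ) = lam • (w' : Fin N → ℂ) := rfl
    rw [← h1, hw'.apply_eq_smul, h2]
  have hlamspec : lam ∈ spectrum ℂ B := by
    rw [mem_spectrum_iff_det]
    rw [← Matrix.exists_mulVec_eq_zero_iff]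
    exact ⟨w', hw'0, by rw [Matrix.sub_mulVec, Matrix.smul_mulVec, Matrix.one_mulVec,
      hBw, sub_self]⟩
  have hre : lam.re < 0 := hB lam hlamspec
  -- μ = exp lam
  have hWev : (exp B) *ᵥ (w' : Fin N → ℂ) = μ • (w' : Fin N → ℂ) :=
    Module.End.mem_eigenspace_iff.mp w'.2
  have hexp : (exp B) *ᵥ (w' : Fin N → ℂ) = Complex.exp lam • (w' : Fin N → ℂ) :=
    exp_mulVec_eigen B _ lam hBw
  have hμeq : μ = Complex.exp lam := by
    have h0 : (μ - Complex.exp lam) • (w' : Fin N → ℂ) = 0 := by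
      rw [sub_smul, ← hWev, ← hexp, sub_self]
    rcases smul_eq_zero.mp h0 with h | h
    · exact sub_eq_zero.mp h
    · exact absurd h hw'0
  rw [hμeq]
  have : ‖Complex.exp lam‖ = Real.exp lam.re := Complex.norm_exp lam
  rw [this]
  exact Real.exp_lt_one_iff.mpr hre  -- name may differ

end eig

variable {N : ℕ}

lemma exp_pow_entry_tendsto_zero (hN : 0 < N) (B : Matrix (Fin N) (Fin N) ℂ)
    (hB : ∀ lam ∈ spectrum ℂ B, lam.re < 0) (i j : Fin N) :
    Tendsto (fun m : ℕ => ((exp B) ^ m) i j) atTop (𝓝 0) := by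
  letI : SeminormedRing (Matrix (Fin N) (Fin N) ℂ) := Matrix.linftyOpSemiNormedRing
  letI : NormedRing (Matrix (Fin N) (Fin N) ℂ) := Matrix.linftyOpNormedRing
  letI : NormedAlgebra ℂ (Matrix (Fin N) (Fin N) ℂ) := Matrix.linftyOpNormedAlgebra
  haveI : Nonempty (Fin N) := Fin.pos_iff_nonempty.mp hN
  set E := exp B with hE
  have hne : (spectrum ℂ E).Nonempty :=
    spectrum.nonempty_of_isAlgClosed_of_finiteDimensional ℂ E
  have hρ : spectralRadius ℂ E < 1 := by
    have h1 : ∀ k ∈ spectrum ℂ E, ‖k‖₊ < (1 : NNReal) := by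
      intro k hk
      have h := spectrum_exp_norm_lt B hB k hk
      rw [← NNReal.coe_lt_coe]
      simpa [coe_nnnorm] using h
    simpa using spectrum.spectralRadius_lt_of_forall_lt_of_nonempty hne h1
  obtain ⟨r, hr1, hr2⟩ := exists_between hρ
  have hgel := spectrum.pow_nnnorm_pow_one_div_tendsto_nhds_spectralRadius E
  have hev : ∀ᶠ m : ℕ in atTop, (‖E ^ m‖₊ : ENNReal) ^ (1 / (m : ℝ)) < r :=
    hgel.eventually_lt_const hr1
  have hbound : ∀ᶠ m : ℕ in atTop, (‖E ^ m‖₊ : ENNReal) ≤ r ^ m := by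
    filter_upwards [hev, eventually_ge_atTop 1] with m hm hm1
    have hm0 : (m : ℝ) ≠ 0 := Nat.cast_ne_zero.mpr (by omega)
    have h2 : ((‖E ^ m‖₊ : ENNReal) ^ (1 / (m : ℝ))) ^ (m : ℝ) ≤ r ^ (m : ℝ) :=
      ENNReal.rpow_le_rpow hm.le (by positivity)
    rw [← ENNReal.rpow_mul, one_div, inv_mul_cancel₀ hm0, ENNReal.rpow_one,
      ENNReal.rpow_natCast] at h2
    exact h2
  have hpow : Tendsto (fun m : ℕ => (r : ENNReal) ^ m) atTop (𝓝 0) :=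
    ENNReal.tendsto_pow_atTop_nhds_zero_of_lt_one hr2
  have hnorm : Tendsto (fun m : ℕ => (‖E ^ m‖₊ : ENNReal)) atTop (𝓝 0) := by
    apply tendsto_of_tendsto_of_tendsto_of_le_of_le' tendsto_const_nhds hpow
    · exact Eventually.of_forall fun m => zero_le
    · exact hbound
  -- entrywise
  have hentry : ∀ m : ℕ, (‖(E ^ m) i j‖₊ : ENNReal) ≤ (‖E ^ m‖₊ : ENNReal) := by
    intro m
    rw [ENNReal.coe_le_coe, Matrix.linfty_opNNNorm_def]
    calc ‖(E ^ m) i j‖₊ ≤ ∑ l, ‖(E ^ m) i l‖₊ :=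
          Finset.single_le_sum (f := fun l => ‖(E ^ m) i l‖₊) (fun l _ => zero_le) (Finset.mem_univ j)
    _ ≤ _ := Finset.le_sup (f := fun i => ∑ l, ‖(E ^ m) i l‖₊) (Finset.mem_univ i)
  have h3 : Tendsto (fun m : ℕ => (‖(E ^ m) i j‖₊ : ENNReal)) atTop (𝓝 0) := by
    apply tendsto_of_tendsto_of_tendsto_of_le_of_le' tendsto_const_nhds hnorm
    · exact Eventually.of_forall fun m => zero_le
    · exact Eventually.of_forall hentry
  rw [← ENNReal.coe_zero, ENNReal.tendsto_coe] at h3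
  rw [tendsto_zero_iff_norm_tendsto_zero]
  have h4 := NNReal.tendsto_coe.mpr h3
  simpa [coe_nnnorm] using h4

variable {N : ℕ}

lemma lyap_posdef (A Qm Mm : Matrix (Fin N) (Fin N) ℝ)
    (hA : ∀ lam ∈ spectrum ℂ (A.map (Complex.ofReal : ℝ → ℂ)), lam.re < 0)
    (hQ : ∀ w : Fin N → ℝ, w ≠ 0 → 0 < w ⬝ᵥ Qm *ᵥ w)
    (heq : Aᵀ * Mm + Mm * A + Qm = 0)
    (z : Fin N → ℝ) (hz : z ≠ 0) : 0 < z ⬝ᵥ Mm *ᵥ z := by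
  letI : SeminormedRing (Matrix (Fin N) (Fin N) ℝ) := Matrix.linftyOpSemiNormedRing
  letI : NormedRing (Matrix (Fin N) (Fin N) ℝ) := Matrix.linftyOpNormedRing
  letI : NormedAlgebra ℝ (Matrix (Fin N) (Fin N) ℝ) := Matrix.linftyOpNormedAlgebra
  have hN : 0 < N := by
    rcases Function.ne_iff.mp hz with ⟨i, -⟩
    exact i.pos
  -- the flow
  set Φ : ℝ → Matrix (Fin N) (Fin N) ℝ := fun t => exp (t • A) with hΦdef
  set x : ℝ → Fin N → ℝ := fun t => Φ t *ᵥ z with hxdef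
  -- entry evaluation as a continuous linear map
  have entryCLM : ∀ i j : Fin N, ∃ L : Matrix (Fin N) (Fin N) ℝ →L[ℝ] ℝ,
      ∀ X, L X = X i j := by
    intro i j
    refine ⟨⟨{ toFun := fun X => X i j
               map_add' := fun X Y => rfl
               map_smul' := fun a X => rfl }, ?_⟩, fun X => rfl⟩
    exact LinearMap.continuous_of_finiteDimensional _
  -- derivative of entries of Φ
  have hΦent : ∀ (t : ℝ) (i j : Fin N),
      HasDerivAt (fun s => Φ s i j) ((A * Φ t) i j) t := by
    intro t i j
    obtain ⟨L, hL⟩ := entryCLM i j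
    have hd : HasDerivAt Φ (A * Φ t) t := hasDerivAt_exp_smul_const' A t
    have := L.hasFDerivAt.comp_hasDerivAt t hd
    have hcomp : (⇑L ∘ Φ) = fun s => Φ s i j := funext fun s => hL _
    rw [hcomp] at this
    exact this.congr_deriv (hL _)
  -- derivative of x entries
  have hxent : ∀ (t : ℝ) (i : Fin N),
      HasDerivAt (fun s => x s i) ((A *ᵥ x t) i) t := by
    intro t i
    have h1 : ∀ s, x s i = ∑ j, Φ s i j * z j := fun s => rfl
    have h2 : HasDerivAt (fun s => ∑ j, Φ s i j * z j)
        (∑ j, (A * Φ t) i j * z j) t :=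
      HasDerivAt.fun_sum fun j _ => (hΦent t i j).mul_const (z j)
    have h3 : (∑ j, (A * Φ t) i j * z j) = (A *ᵥ x t) i := by
      rw [hxdef]
      simp only []
      rw [Matrix.mulVec_mulVec]
      rfl
    simp_rw [← h1] at h2
    rwa [h3] at h2
  -- the Lyapunov function
  set g : ℝ → ℝ := fun t => x t ⬝ᵥ Mm *ᵥ x t with hgdef
  have hgd : ∀ t : ℝ, HasDerivAt g (-(x t ⬝ᵥ Qm *ᵥ x t)) t := by
    intro t
    have hsum : HasDerivAt (fun s => ∑ i, x s i * ∑ j, Mm i j * x s j)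
        (∑ i, ((A *ᵥ x t) i * ∑ j, Mm i j * x t j
          + x t i * ∑ j, Mm i j * (A *ᵥ x t) j)) t := by
      apply HasDerivAt.fun_sum
      intro i _
      exact (hxent t i).mul (HasDerivAt.fun_sum fun j _ => (hxent t j).const_mul (Mm i j))
    have hform : (fun s => ∑ i, x s i * ∑ j, Mm i j * x s j) = g := rfl
    rw [hform] at hsum
    convert hsum using 1
    have e1 : (∑ i, ((A *ᵥ x t) i * ∑ j, Mm i j * x t j
          + x t i * ∑ j, Mm i j * (A *ᵥ x t) j))
        = (A *ᵥ x t) ⬝ᵥ Mm *ᵥ x t + x t ⬝ᵥ Mm *ᵥ (A *ᵥ x t) := by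
      rw [Finset.sum_add_distrib]; rfl
    rw [e1]
    have e2 : (A *ᵥ x t) ⬝ᵥ Mm *ᵥ x t = x t ⬝ᵥ (Aᵀ * Mm) *ᵥ x t := by
      rw [← Matrix.mulVec_mulVec, Matrix.dotProduct_mulVec (x t),
        ← Matrix.mulVec_transpose, Matrix.transpose_transpose,
        Matrix.dotProduct_mulVec (A *ᵥ x t), Matrix.dotProduct_mulVec,
        Matrix.vecMul_vecMul]
    have e3 : x t ⬝ᵥ Mm *ᵥ (A *ᵥ x t) = x t ⬝ᵥ (Mm * A) *ᵥ x t := by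
      rw [Matrix.mulVec_mulVec]
    have e4 : Aᵀ * Mm + Mm * A = -Qm := by
      have := heq
      rwa [add_eq_zero_iff_eq_neg] at this
    rw [e2, e3, ← dotProduct_add, ← Matrix.add_mulVec, e4, Matrix.neg_mulVec,
      dotProduct_neg]
  -- x never vanishes
  have hxne : ∀ t, x t ≠ 0 := by
    intro t hxt
    obtain ⟨u, hu⟩ := Matrix.isUnit_exp (t • A)
    apply hz
    have h0 : Φ t *ᵥ z = 0 := hxt
    have hinv : (↑u⁻¹ : Matrix (Fin N) (Fin N) ℝ) *ᵥ (Φ t *ᵥ z) = z := by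
      rw [Matrix.mulVec_mulVec]
      show ((↑u⁻¹ : Matrix (Fin N) (Fin N) ℝ) * exp (t • A)) *ᵥ z = z
      rw [← hu, Units.inv_mul, Matrix.one_mulVec]
    rw [← hinv, h0, Matrix.mulVec_zero]
  have hderivneg : ∀ t, deriv g t < 0 := by
    intro t
    rw [(hgd t).deriv]
    have := hQ (x t) (hxne t)
    linarith
  have hanti : StrictAnti g := strictAnti_of_deriv_neg hderivneg
  -- complexification and decay
  letI : SeminormedRing (Matrix (Fin N) (Fin N) ℂ) := Matrix.linftyOpSemiNormedRing
  letI : NormedRing (Matrix (Fin N) (Fin N) ℂ) := Matrix.linftyOpNormedRing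
  letI : NormedAlgebra ℝ (Matrix (Fin N) (Fin N) ℂ) := Matrix.linftyOpNormedAlgebra
  set B : Matrix (Fin N) (Fin N) ℂ := A.map (Complex.ofReal : ℝ → ℂ) with hBdef
  set f : Matrix (Fin N) (Fin N) ℝ →+* Matrix (Fin N) (Fin N) ℂ :=
    (Complex.ofRealHom : ℝ →+* ℂ).mapMatrix with hfdef
  have hfc : Continuous f := by
    let Lf : Matrix (Fin N) (Fin N) ℝ →ₗ[ℝ] Matrix (Fin N) (Fin N) ℂ :=
      { toFun := fun X => X.map (Complex.ofReal : ℝ → ℂ)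
        map_add' := fun X Y => by ext i j; simp [Matrix.map_apply]
        map_smul' := fun a X => by
          ext i j
          simp [Matrix.map_apply, Complex.real_smul] }
    have : (⇑f : Matrix (Fin N) (Fin N) ℝ → Matrix (Fin N) (Fin N) ℂ) = ⇑Lf := rfl
    rw [this]
    exact Lf.continuous_of_finiteDimensional
  have hmapexp : f (exp A) = exp B := by
    exact NormedSpace.map_exp_of_mem_ball (𝕂 := ℝ) f hfc A
      ((NormedSpace.expSeries_radius_eq_top ℝ (Matrix (Fin N) (Fin N) ℝ)).symm ▸ edist_lt_top _ _)
  have hentry : ∀ i j : Fin N, Tendsto (fun m : ℕ => ((exp A) ^ m) i j) atTop (𝓝 0) := by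
    intro i j
    have hC := exp_pow_entry_tendsto_zero hN B hA i j
    have hrel : ∀ m : ℕ, ((exp A) ^ m) i j = (((exp B) ^ m) i j).re := by
      intro m
      rw [← hmapexp, ← map_pow]
      have : (f ((exp A) ^ m)) i j = (((exp A) ^ m) i j : ℂ) := rfl
      rw [this, Complex.ofReal_re]
    have := (Complex.continuous_re.tendsto 0).comp hC
    simp only [Function.comp, Complex.zero_re] at this
    have hfun : (fun m : ℕ => ((exp A) ^ m) i j)
        = fun m : ℕ => (((exp B) ^ m) i j).re := funext hrel
    rw [hfun]
    exact this
  have hEpow : ∀ m : ℕ, x (m : ℝ) = ((exp A) ^ m) *ᵥ z := by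
    intro m
    have h1 : exp ((m : ℝ) • A) = (exp A) ^ m := by
      rw [Nat.cast_smul_eq_nsmul ℝ m A]
      exact Matrix.exp_nsmul m A
    show exp ((m : ℝ) • A) *ᵥ z = _
    rw [h1]
  -- x(m) tends to 0
  have hxm : ∀ i : Fin N, Tendsto (fun m : ℕ => x (m : ℝ) i) atTop (𝓝 0) := by
    intro i
    have h1 : (fun m : ℕ => x (m : ℝ) i)
        = fun m : ℕ => ∑ j, ((exp A) ^ m) i j * z j := by
      funext m
      rw [hEpow m]
      rfl
    rw [h1]
    have h2 : Tendsto (fun m : ℕ => ∑ j, ((exp A) ^ m) i j * z j) atTop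
        (𝓝 (∑ j : Fin N, 0 * z j)) :=
      tendsto_finset_sum _ fun j _ => (hentry i j).mul_const (z j)
    simpa using h2
  -- g(m) tends to 0
  have hgm : Tendsto (fun m : ℕ => g (m : ℝ)) atTop (𝓝 0) := by
    have h1 : (fun m : ℕ => g (m : ℝ))
        = fun m : ℕ => ∑ i, x (m : ℝ) i * ∑ j, Mm i j * x (m : ℝ) j := rfl
    rw [h1]
    have h2 : Tendsto (fun m : ℕ => ∑ i, x (m : ℝ) i * ∑ j, Mm i j * x (m : ℝ) j) atTop
        (𝓝 (∑ i : Fin N, 0 * ∑ j : Fin N, Mm i j * 0)) := by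
      apply tendsto_finset_sum
      intro i _
      exact (hxm i).mul
        (tendsto_finset_sum _ fun j _ => ((hxm j).const_mul (Mm i j)))
    simpa using h2
  -- conclusion
  have hg1 : 0 ≤ g 1 := by
    apply le_of_tendsto hgm
    filter_upwards [eventually_ge_atTop 1] with m hm
    exact hanti.antitone (by exact_mod_cast hm)
  have hg0 : g 0 = z ⬝ᵥ Mm *ᵥ z := by
    have hx0 : x 0 = z := by
      show exp ((0 : ℝ) • A) *ᵥ z = z
      rw [zero_smul, NormedSpace.exp_zero, Matrix.one_mulVec]
    show x 0 ⬝ᵥ Mm *ᵥ x 0 = z ⬝ᵥ Mm *ᵥ z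
    rw [hx0]
  have := hanti zero_lt_one
  rw [hg0] at this
  linarith
/-- Smooth dependence of the Lyapunov solution: if the entries of `A` and `Q`
are `ℓ`-times continuously differentiable on an open set `U ⊆ ℝ^q`, `A(p)` is
stable and `Q(p)` is symmetric positive definite for every `p ∈ U`, then there
is a matrix-valued function `M` with `ℓ`-times continuously differentiable
entries on `U` such that `M(p)` is symmetric positive definite and solves the
Lyapunov equation `A(p)ᵀ M(p) + M(p) A(p) + Q(p) = 0` for every `p ∈ U`. -/
theorem stmt_9 (n q : ℕ) (ℓ : ℕ) (U : Set (Fin q → ℝ)) (hU : IsOpen U)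
    (A Q : (Fin q → ℝ) → Matrix (Fin n) (Fin n) ℝ)
    (hA : ∀ k l, ContDiffOn ℝ ℓ (fun p => A p k l) U)
    (hQ : ∀ k l, ContDiffOn ℝ ℓ (fun p => Q p k l) U)
    (hAstable : ∀ p ∈ U, ∀ lam : ℂ,
      lam ∈ spectrum ℂ ((A p).map (Complex.ofReal : ℝ → ℂ)) → lam.re < 0)
    (hQsym : ∀ p ∈ U, (Q p)ᵀ = Q p)
    (hQpos : ∀ p ∈ U, ∀ z : Fin n → ℝ, z ≠ 0 → 0 < z ⬝ᵥ (Q p *ᵥ z)) :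
    ∃ M : (Fin q → ℝ) → Matrix (Fin n) (Fin n) ℝ,
      (∀ k l, ContDiffOn ℝ ℓ (fun p => M p k l) U) ∧
      ∀ p ∈ U,
        (M p)ᵀ = M p ∧
        (∀ z : Fin n → ℝ, z ≠ 0 → 0 < z ⬝ᵥ (M p *ᵥ z)) ∧
        (A p)ᵀ * M p + M p * A p + Q p = 0 := by
  classical
  -- the vectorized right-hand side
  set v : (Fin q → ℝ) → (Fin n × Fin n → ℝ) := fun p y => -(Q p y.1 y.2) with hvdef
  -- the solution via Cramer's rule
  set M : (Fin q → ℝ) → Matrix (Fin n) (Fin n) ℝ :=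
    fun p => Matrix.of fun i j =>
      ((sylv (A p)).det)⁻¹ * ((sylv (A p)).adjugate *ᵥ v p) (i, j) with hMdef
  -- the Sylvester matrix is invertible on U
  have hdet0 : ∀ p ∈ U, (sylv (A p)).det ≠ 0 := by
    intro p hp hdet
    obtain ⟨w, hw0, hw⟩ := Matrix.exists_mulVec_eq_zero_iff.mpr hdet
    set W : Matrix (Fin n) (Fin n) ℝ := Matrix.of fun i j => w (i, j) with hWdef
    have hvecW : (fun y : Fin n × Fin n => W y.1 y.2) = w := by
      funext y
      rfl
    have heqW : (A p)ᵀ * W + W * A p = 0 := by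
      ext i j
      have h1 := sylv_mulVec (A p) W (i, j)
      rw [hvecW, hw] at h1
      exact (h1.symm.trans rfl)
    have hW0 : W = 0 := lyap_uniq_real (A p) (hAstable p hp) W heqW
    apply hw0
    funext y
    have : W y.1 y.2 = 0 := by rw [hW0]; rfl
    exact this
  -- the Lyapunov equation holds on U
  have hsolve : ∀ p ∈ U, (A p)ᵀ * M p + M p * A p + Q p = 0 := by
    intro p hp
    set S := sylv (A p) with hSdef
    set d := S.det with hddef
    have hvec : (fun y : Fin n × Fin n => M p y.1 y.2) = d⁻¹ • (S.adjugate *ᵥ v p) := by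
      funext y
      show d⁻¹ * (S.adjugate *ᵥ v p) (y.1, y.2) = _
      simp [Pi.smul_apply, smul_eq_mul]
    have hSv : S *ᵥ (fun y : Fin n × Fin n => M p y.1 y.2) = v p := by
      rw [hvec, Matrix.mulVec_smul, Matrix.mulVec_mulVec, Matrix.mul_adjugate,
        Matrix.smul_mulVec, Matrix.one_mulVec, smul_smul,
        inv_mul_cancel₀ (hdet0 p hp), one_smul]
    ext i j
    have h1 := sylv_mulVec (A p) (M p) (i, j)
    rw [hSv] at h1
    have h2 : ((A p)ᵀ * M p + M p * A p) i j = -(Q p i j) := h1.symm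
    show ((A p)ᵀ * M p + M p * A p) i j + Q p i j = 0
    rw [h2]
    ring
  -- symmetry
  have hsymm : ∀ p ∈ U, (M p)ᵀ = M p := by
    intro p hp
    have h1 : (A p)ᵀ * M p + M p * A p = -(Q p) := by
      have := hsolve p hp
      rwa [add_eq_zero_iff_eq_neg] at this
    have h2 : (A p)ᵀ * (M p)ᵀ + (M p)ᵀ * A p = -(Q p) := by
      have := congrArg Matrix.transpose h1
      rw [Matrix.transpose_add, Matrix.transpose_mul, Matrix.transpose_mul,
        Matrix.transpose_transpose, Matrix.transpose_neg, hQsym p hp] at this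
      rw [add_comm] at this
      exact this
    have h3 : (A p)ᵀ * (M p - (M p)ᵀ) + (M p - (M p)ᵀ) * A p = 0 := by
      rw [Matrix.mul_sub, Matrix.sub_mul]
      rw [sub_add_sub_comm, h1, h2, sub_self]
    have h4 : M p - (M p)ᵀ = 0 := lyap_uniq_real (A p) (hAstable p hp) _ h3
    have := sub_eq_zero.mp h4
    exact this.symm
  -- smoothness
  have hMcd : ∀ k l, ContDiffOn ℝ ℓ (fun p => M p k l) U := by
    intro k l
    have hsylv_cd : ∀ x y : Fin n × Fin n,
        ContDiffOn ℝ ℓ (fun p => sylv (A p) x y) U := by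
      intro x y
      apply ContDiffOn.add
      · exact (hA y.1 x.1).mul contDiffOn_const
      · exact contDiffOn_const.mul (hA y.2 x.2)
    have hdet_cd : ContDiffOn ℝ ℓ (fun p => (sylv (A p)).det) U :=
      contDiffOn_det' (fun p => sylv (A p)) hsylv_cd
    have hinv_cd : ContDiffOn ℝ ℓ (fun p => ((sylv (A p)).det)⁻¹) U :=
      hdet_cd.inv (hdet0 ·)
    have hsum_cd : ContDiffOn ℝ ℓ
        (fun p => ∑ y : Fin n × Fin n, (sylv (A p)).adjugate (k, l) y * v p y) U := by
      apply ContDiffOn.sum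
      intro y _
      apply ContDiffOn.mul
      · exact contDiffOn_adjugate (fun p => sylv (A p)) hsylv_cd (k, l) y
      · exact (hQ y.1 y.2).neg
    have hform : (fun p => M p k l)
        = fun p => ((sylv (A p)).det)⁻¹
            * ∑ y : Fin n × Fin n, (sylv (A p)).adjugate (k, l) y * v p y := rfl
    rw [hform]
    exact hinv_cd.mul hsum_cd
  refine ⟨M, hMcd, fun p hp => ⟨hsymm p hp, fun z hz => ?_, hsolve p hp⟩⟩
  exact lyap_posdef (A p) (Q p) (M p) (hAstable p hp)
    (fun w hw => hQpos p hp w hw) (hsolve p hp) z hz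
end

section
/- Let (Ω, 𝒜, μ) be a probability space and Φ₁, …, Φₘ : Ω → ℝ measurable and bounded. Let f : ℝⁿ × Ω → ℝⁿ be such that f(·, ω) is continuously differentiable on ℝⁿ for every ω, the maps ω ↦ f(x, ω) and ω ↦ D_x f(x, ω) are measurable for every x, and there exists a μ-integrable function g : Ω → ℝ with ‖f(x, ω)‖ ≤ g(ω) and ‖D_x f(x, ω)‖ ≤ g(ω) for all x ∈ ℝⁿ and all ω ∈ Ω. Define F : ℝ^{mn} → ℝ^{mn} componentwise by F_i(v) = ∫_Ω f(Σ_{j=1}^m v_j Φ_j(ω), ω) Φ_i(ω) dμ(ω) for v = (v₁ᵀ, …, vₘᵀ)ᵀ with v_j ∈ ℝⁿ. Then F is differentiable at every v ∈ ℝ^{mn}, and its Jacobian matrix at v is the block matrix whose (i,j) block equals ∫_Ω D_x f(Σ_{k=1}^m v_k Φ_k(ω), ω) Φ_i(ω) Φ_j(ω) dμ(ω). -/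
open Matrix MeasureTheory Metric

section GalerkinAux

variable (n m : ℕ) {Ω : Type*} (Φ : Fin m → Ω → ℝ)

/-- The linear map `w ↦ (l ↦ ∑ j, w (j,l) * Φ j ω)`. -/
noncomputable def galA (ω : Ω) : (Fin m × Fin n → ℝ) →L[ℝ] (Fin n → ℝ) :=
  LinearMap.toContinuousLinearMap
    { toFun := fun w l => ∑ j, w (j, l) * Φ j ω
      map_add' := fun w w' => funext fun l => by
        simp [add_mul, Finset.sum_add_distrib]
      map_smul' := fun c w => funext fun l => by
        simp [Finset.mul_sum, mul_assoc] }

@[simp] lemma galA_apply (ω : Ω) (w : Fin m × Fin n → ℝ) :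
    galA n m Φ ω w = fun l => ∑ j, w (j, l) * Φ j ω := rfl

/-- The linear map `y ↦ (p ↦ y p.2 * Φ p.1 ω)`. -/
noncomputable def galM (ω : Ω) : (Fin n → ℝ) →L[ℝ] (Fin m × Fin n → ℝ) :=
  LinearMap.toContinuousLinearMap
    { toFun := fun y p => y p.2 * Φ p.1 ω
      map_add' := fun y y' => funext fun p => add_mul _ _ _
      map_smul' := fun c y => funext fun p => by simp [mul_assoc] }

@[simp] lemma galM_apply (ω : Ω) (y : Fin n → ℝ) :
    galM n m Φ ω y = fun p => y p.2 * Φ p.1 ω := rfl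

lemma galM_norm_le (ω : Ω) {C : ℝ} (hC0 : 0 ≤ C) (hC : ∀ i, |Φ i ω| ≤ C) :
    ‖galM n m Φ ω‖ ≤ C := by
  refine ContinuousLinearMap.opNorm_le_bound _ hC0 fun y => ?_
  rw [galM_apply]
  refine (pi_norm_le_iff_of_nonneg (by positivity)).2 fun p => ?_
  rw [norm_mul, mul_comm C ‖y‖]
  refine mul_le_mul (norm_le_pi_norm y p.2) ?_ (norm_nonneg _) (norm_nonneg _)
  rw [Real.norm_eq_abs]; exact hC p.1

lemma galA_norm_le (ω : Ω) {C : ℝ} (hC0 : 0 ≤ C) (hC : ∀ i, |Φ i ω| ≤ C) :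
    ‖galA n m Φ ω‖ ≤ (m : ℝ) * C := by
  have hmC : (0:ℝ) ≤ (m : ℝ) * C := mul_nonneg (Nat.cast_nonneg m) hC0
  refine ContinuousLinearMap.opNorm_le_bound _ hmC fun w => ?_
  rw [galA_apply]
  refine (pi_norm_le_iff_of_nonneg (mul_nonneg hmC (norm_nonneg w))).2 fun l => ?_
  calc ‖∑ j, w (j, l) * Φ j ω‖ ≤ ∑ j, ‖w (j, l) * Φ j ω‖ := norm_sum_le _ _
    _ ≤ ∑ _j : Fin m, ‖w‖ * C := by
        refine Finset.sum_le_sum fun j _ => ?_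
        rw [norm_mul]
        refine mul_le_mul (norm_le_pi_norm w (j, l)) ?_ (norm_nonneg _) (norm_nonneg _)
        rw [Real.norm_eq_abs]; exact hC j
    _ = (m : ℝ) * C * ‖w‖ := by
        simp [Finset.sum_const]; ring
end GalerkinAux

lemma galerkin_entry_le {n : ℕ} (X : Matrix (Fin n) (Fin n) ℝ) (k l : Fin n) :
    |X k l| ≤ ‖LinearMap.toContinuousLinearMap X.mulVecLin‖ := by
  classical
  have h1 : X.mulVec (Pi.single l 1) k = X k l := by
    simp [Matrix.mulVec, dotProduct, Pi.single_apply, mul_ite,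
      Finset.sum_ite_eq']
  calc |X k l| = ‖X.mulVec (Pi.single l 1) k‖ := by rw [h1, Real.norm_eq_abs]
    _ ≤ ‖X.mulVec (Pi.single l 1)‖ := norm_le_pi_norm _ k
    _ = ‖(LinearMap.toContinuousLinearMap X.mulVecLin) (Pi.single l 1)‖ := rfl
    _ ≤ ‖LinearMap.toContinuousLinearMap X.mulVecLin‖ * ‖(Pi.single l 1 : Fin n → ℝ)‖ :=
        ContinuousLinearMap.le_opNorm _ _
    _ ≤ ‖LinearMap.toContinuousLinearMap X.mulVecLin‖ * 1 := by
        have h2 : ‖(Pi.single l 1 : Fin n → ℝ)‖ = ‖(1:ℝ)‖ :=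
          Pi.norm_single (G := fun _ : Fin n => ℝ) (1:ℝ)
        rw [h2, norm_one]
    _ = _ := mul_one _

lemma galerkin_meas_comp {n : ℕ} {Ω : Type*} [MeasurableSpace Ω]
    (h : (Fin n → ℝ) → Ω → ℝ) (hcont : ∀ ω, Continuous fun x => h x ω)
    (hmeas : ∀ x, Measurable (h x)) {x : Ω → Fin n → ℝ} (hx : Measurable x) :
    Measurable fun ω => h (x ω) ω :=
  (measurable_uncurry_of_continuous_of_measurable hcont hmeas).comp (hx.prodMk measurable_id)

lemma galerkin_integral_eval {ι : Type*} [Fintype ι] {Ω : Type*} [MeasurableSpace Ω]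
    (μ : Measure Ω) (φ : Ω → ι → ℝ) (hφ : Integrable φ μ) (i : ι) :
    (∫ ω, φ ω ∂μ) i = ∫ ω, φ ω i ∂μ :=
  ((ContinuousLinearMap.proj (R := ℝ) (φ := fun _ : ι => ℝ) i).integral_comp_comm hφ).symm
/-- Differentiability of the stochastic Galerkin projection of a nonlinear
right-hand side: if `f(·, ω)` is `C¹` with Jacobian `f'(x, ω)`, with suitable
measurability, an integrable uniform dominating function `g`, and bounded basis
functions `Φᵢ`, then `F` with components
`Fᵢ(v) = ∫ f(∑ⱼ vⱼ Φⱼ(ω), ω) Φᵢ(ω) dμ` is differentiable at every `v`, with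
Jacobian the block matrix with blocks `∫ D_x f(∑ₖ vₖ Φₖ(ω), ω) Φᵢ Φⱼ dμ`. -/
theorem stmt_13 (n m : ℕ) {Ω : Type*} [MeasurableSpace Ω]
    (μ : Measure Ω) [IsProbabilityMeasure μ]
    (Φ : Fin m → Ω → ℝ) (hΦmeas : ∀ i, Measurable (Φ i))
    (hΦbdd : ∀ i, ∃ C : ℝ, ∀ ω, |Φ i ω| ≤ C)
    (f : (Fin n → ℝ) → Ω → (Fin n → ℝ))
    (f' : (Fin n → ℝ) → Ω → Matrix (Fin n) (Fin n) ℝ)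
    (hf' : ∀ ω x, HasFDerivAt (fun y => f y ω)
      (LinearMap.toContinuousLinearMap (f' x ω).mulVecLin) x)
    (hf'cont : ∀ ω k l, Continuous (fun x => f' x ω k l))
    (hfmeas : ∀ x k, Measurable (fun ω => f x ω k))
    (hf'meas : ∀ x k l, Measurable (fun ω => f' x ω k l))
    (g : Ω → ℝ) (hg : Integrable g μ)
    (hfbd : ∀ x ω, ‖f x ω‖ ≤ g ω)
    (hf'bd : ∀ x ω, ‖LinearMap.toContinuousLinearMap (f' x ω).mulVecLin‖ ≤ g ω) :
    ∀ v : Fin m × Fin n → ℝ,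
      HasFDerivAt
        (fun w : Fin m × Fin n → ℝ => fun p : Fin m × Fin n =>
          ∫ ω, f (fun l => ∑ j, w (j, l) * Φ j ω) ω p.2 * Φ p.1 ω ∂μ)
        (LinearMap.toContinuousLinearMap
          (Matrix.of (fun p q : Fin m × Fin n =>
            ∫ ω, f' (fun l => ∑ j, v (j, l) * Φ j ω) ω p.2 q.2 *
              Φ p.1 ω * Φ q.1 ω ∂μ)).mulVecLin)
        v := by
  intro v
  classical
  obtain ⟨C, hC1, hC⟩ : ∃ C : ℝ, 1 ≤ C ∧ ∀ i ω, |Φ i ω| ≤ C := by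
    refine ⟨1 + ∑ i, |(hΦbdd i).choose|,
      le_add_of_nonneg_right (Finset.sum_nonneg fun i _ => abs_nonneg _), fun i ω => ?_⟩
    calc |Φ i ω| ≤ (hΦbdd i).choose := (hΦbdd i).choose_spec ω
      _ ≤ |(hΦbdd i).choose| := le_abs_self _
      _ ≤ ∑ j, |(hΦbdd j).choose| :=
          Finset.single_le_sum (f := fun j => |(hΦbdd j).choose|)
            (fun j _ => abs_nonneg _) (Finset.mem_univ i)
      _ ≤ 1 + ∑ j, |(hΦbdd j).choose| := le_add_of_nonneg_left zero_le_one
  have hC0 : (0:ℝ) ≤ C := zero_le_one.trans hC1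
  have hg0 : ∀ ω, 0 ≤ g ω := fun ω => (norm_nonneg _).trans (hfbd 0 ω)
  have hcontf : ∀ ω, Continuous fun x => f x ω := fun ω => by
    have hdiff : Differentiable ℝ (fun y => f y ω) := fun x => (hf' ω x).differentiableAt
    exact hdiff.continuous
  -- the integrand and its derivative
  set Fn : (Fin m × Fin n → ℝ) → Ω → (Fin m × Fin n → ℝ) := fun w ω p =>
    f (fun l => ∑ j, w (j, l) * Φ j ω) ω p.2 * Φ p.1 ω with hFn
  set Fd : (Fin m × Fin n → ℝ) → Ω → (Fin m × Fin n → ℝ) →L[ℝ] (Fin m × Fin n → ℝ) :=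
    fun w ω => (galM n m Φ ω).comp
      ((LinearMap.toContinuousLinearMap (f' (galA n m Φ ω w) ω).mulVecLin).comp
        (galA n m Φ ω)) with hFd
  -- measurability of the composed maps
  have hxmeas : ∀ w : Fin m × Fin n → ℝ, Measurable fun ω => galA n m Φ ω w := fun w => by
    simp only [galA_apply]
    exact measurable_pi_lambda _ fun l =>
      Finset.measurable_sum _ fun j _ => (hΦmeas j).const_mul _
  have hfcomp : ∀ (w : Fin m × Fin n → ℝ) (k : Fin n),
      Measurable fun ω => f (galA n m Φ ω w) ω k := fun w k =>
    galerkin_meas_comp (fun x ω => f x ω k)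
      (fun ω => (continuous_apply k).comp (hcontf ω)) (fun x => hfmeas x k) (hxmeas w)
  have hf'comp : ∀ (k l : Fin n),
      Measurable fun ω => f' (galA n m Φ ω v) ω k l := fun k l =>
    galerkin_meas_comp (fun x ω => f' x ω k l) (fun ω => hf'cont ω k l)
      (fun x => hf'meas x k l) (hxmeas v)
  -- properties of Fn
  have hFnmeas : ∀ w, AEStronglyMeasurable (Fn w) μ := fun w =>
    (measurable_pi_lambda _ fun p : Fin m × Fin n =>
      ((hfcomp w p.2).mul (hΦmeas p.1))).aestronglyMeasurable
  have hFnle : ∀ w ω, ‖Fn w ω‖ ≤ g ω * C := fun w ω => by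
    refine (pi_norm_le_iff_of_nonneg (mul_nonneg (hg0 ω) hC0)).2 fun p => ?_
    rw [hFn]
    rw [norm_mul]
    refine mul_le_mul ((norm_le_pi_norm _ p.2).trans (hfbd _ ω)) ?_ (norm_nonneg _) (hg0 ω)
    rw [Real.norm_eq_abs]; exact hC p.1 ω
  have hFnint : ∀ w, Integrable (Fn w) μ := fun w =>
    (hg.mul_const C).mono' (hFnmeas w) (Filter.Eventually.of_forall (hFnle w))
  -- Fn has derivative Fd
  have hFdderiv : ∀ (ω : Ω) (w : Fin m × Fin n → ℝ),
      HasFDerivAt (fun w => Fn w ω) (Fd w ω) w := fun ω w => by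
    have h1 : HasFDerivAt (fun w => f (galA n m Φ ω w) ω)
        ((LinearMap.toContinuousLinearMap (f' (galA n m Φ ω w) ω).mulVecLin).comp
          (galA n m Φ ω)) w :=
      (hf' ω (galA n m Φ ω w)).comp w (galA n m Φ ω).hasFDerivAt
    exact (galM n m Φ ω).hasFDerivAt.comp w h1
  -- bound on Fd
  have hFdle : ∀ (w : Fin m × Fin n → ℝ) (ω : Ω),
      ‖Fd w ω‖ ≤ C * (g ω * ((m : ℝ) * C)) := fun w ω => by
    calc ‖Fd w ω‖
        ≤ ‖galM n m Φ ω‖ *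
          ‖(LinearMap.toContinuousLinearMap (f' (galA n m Φ ω w) ω).mulVecLin).comp
            (galA n m Φ ω)‖ := ContinuousLinearMap.opNorm_comp_le _ _
      _ ≤ ‖galM n m Φ ω‖ *
          (‖LinearMap.toContinuousLinearMap (f' (galA n m Φ ω w) ω).mulVecLin‖ *
            ‖galA n m Φ ω‖) :=
          mul_le_mul_of_nonneg_left (ContinuousLinearMap.opNorm_comp_le _ _) (norm_nonneg _)
      _ ≤ C * (g ω * ((m : ℝ) * C)) :=
          mul_le_mul (galM_norm_le n m Φ ω hC0 (fun i => hC i ω))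
            (mul_le_mul (hf'bd _ ω) (galA_norm_le n m Φ ω hC0 (fun i => hC i ω))
              (norm_nonneg _) (hg0 ω))
            (mul_nonneg (norm_nonneg _) (norm_nonneg _)) hC0
  -- key algebraic identity
  have halg : ∀ (ω : Ω) (X : Matrix (Fin n) (Fin n) ℝ) (w : Fin m × Fin n → ℝ)
      (p : Fin m × Fin n),
      galM n m Φ ω (X.mulVec (galA n m Φ ω w)) p
        = ∑ q : Fin m × Fin n, X p.2 q.2 * Φ p.1 ω * Φ q.1 ω * w q := by
    intro ω X w p
    show (∑ l, X p.2 l * (∑ j, w (j, l) * Φ j ω)) * Φ p.1 ω = _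
    rw [Fintype.sum_prod_type, Finset.sum_comm, Finset.sum_mul]
    refine Finset.sum_congr rfl fun l _ => ?_
    rw [Finset.mul_sum, Finset.sum_mul]
    exact Finset.sum_congr rfl fun j _ => by ring
  -- measurability of Fd v
  have hent : Measurable fun ω => (fun p q : Fin m × Fin n =>
      f' (galA n m Φ ω v) ω p.2 q.2 * Φ p.1 ω * Φ q.1 ω) :=
    measurable_pi_lambda _ fun p => measurable_pi_lambda _ fun q =>
      ((hf'comp p.2 q.2).mul (hΦmeas p.1)).mul (hΦmeas q.1)
  let Ψ : ((Fin m × Fin n) → (Fin m × Fin n) → ℝ) →ₗ[ℝ]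
      ((Fin m × Fin n → ℝ) →L[ℝ] (Fin m × Fin n → ℝ)) :=
    { toFun := fun X => LinearMap.toContinuousLinearMap (Matrix.of X).mulVecLin
      map_add' := fun X Y => ContinuousLinearMap.ext fun w => funext fun k => by
        show (Matrix.of (X + Y) *ᵥ w) k = (Matrix.of X *ᵥ w + Matrix.of Y *ᵥ w) k
        simp [Matrix.mulVec, dotProduct, add_mul, Finset.sum_add_distrib]
      map_smul' := fun c X => ContinuousLinearMap.ext fun w => funext fun k => by
        show (Matrix.of (c • X) *ᵥ w) k = (c • (Matrix.of X *ᵥ w)) k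
        simp [Matrix.mulVec, dotProduct, Finset.mul_sum, mul_assoc] }
  have hΨcont : Continuous Ψ := Ψ.continuous_of_finiteDimensional
  have hFdeq : ∀ ω, Fd v ω = Ψ (fun p q : Fin m × Fin n =>
      f' (galA n m Φ ω v) ω p.2 q.2 * Φ p.1 ω * Φ q.1 ω) := fun ω => by
    refine ContinuousLinearMap.ext fun w => funext fun p => ?_
    rw [show Fd v ω w p
        = galM n m Φ ω ((f' (galA n m Φ ω v) ω).mulVec (galA n m Φ ω w)) p from rfl, halg]
    show _ = ∑ q : Fin m × Fin n,
        f' (galA n m Φ ω v) ω p.2 q.2 * Φ p.1 ω * Φ q.1 ω * w q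
    rfl
  have hFdmeas : AEStronglyMeasurable (Fd v) μ := by
    have : Fd v = fun ω => Ψ (fun p q : Fin m × Fin n =>
        f' (galA n m Φ ω v) ω p.2 q.2 * Φ p.1 ω * Φ q.1 ω) := funext hFdeq
    rw [this]
    exact (hΨcont.comp_stronglyMeasurable hent.stronglyMeasurable).aestronglyMeasurable
  have hFdint : Integrable (Fd v) μ :=
    ((hg.mul_const ((m : ℝ) * C)).const_mul C).mono' hFdmeas
      (Filter.Eventually.of_forall fun ω => hFdle v ω)
  -- the dominated-derivative theorem
  have key : HasFDerivAt (fun w => ∫ ω, Fn w ω ∂μ) (∫ ω, Fd v ω ∂μ) v :=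
    hasFDerivAt_integral_of_dominated_of_fderiv_le (Metric.ball_mem_nhds v one_pos)
      (Filter.Eventually.of_forall hFnmeas) (hFnint v) hFdmeas
      (Filter.Eventually.of_forall fun ω x _ => hFdle x ω)
      ((hg.mul_const ((m : ℝ) * C)).const_mul C)
      (Filter.Eventually.of_forall fun ω x _ => hFdderiv ω x)
  have hfun : (fun w : Fin m × Fin n → ℝ => fun p : Fin m × Fin n =>
      ∫ ω, f (fun l => ∑ j, w (j, l) * Φ j ω) ω p.2 * Φ p.1 ω ∂μ)
      = fun w => ∫ ω, Fn w ω ∂μ := by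
    funext w
    funext p
    exact (galerkin_integral_eval μ (Fn w) (hFnint w) p).symm
  rw [hfun]
  convert key using 1
  -- identify the derivative
  have heint : ∀ p q : Fin m × Fin n, Integrable
      (fun ω => f' (galA n m Φ ω v) ω p.2 q.2 * Φ p.1 ω * Φ q.1 ω) μ := fun p q => by
    refine ((hg.mul_const C).mul_const C).mono'
      ((((hf'comp p.2 q.2).mul (hΦmeas p.1)).mul (hΦmeas q.1)).aestronglyMeasurable)
      (Filter.Eventually.of_forall fun ω => ?_)
    rw [Real.norm_eq_abs, abs_mul, abs_mul]
    refine mul_le_mul (mul_le_mul ((galerkin_entry_le _ _ _).trans (hf'bd _ ω)) (hC p.1 ω)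
      (abs_nonneg _) (hg0 ω)) (hC q.1 ω) (abs_nonneg _)
      (mul_nonneg (hg0 ω) hC0)
  refine ContinuousLinearMap.ext fun w => funext fun p => ?_
  rw [ContinuousLinearMap.integral_apply hFdint,
    galerkin_integral_eval μ _ (hFdint.apply_continuousLinearMap w) p]
  show ∑ q : Fin m × Fin n,
      (∫ ω, f' (fun l => ∑ j, v (j, l) * Φ j ω) ω p.2 q.2 * Φ p.1 ω * Φ q.1 ω ∂μ) * w q
    = ∫ ω, Fd v ω w p ∂μ
  calc ∑ q : Fin m × Fin n,
      (∫ ω, f' (fun l => ∑ j, v (j, l) * Φ j ω) ω p.2 q.2 * Φ p.1 ω * Φ q.1 ω ∂μ) * w q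
      = ∑ q : Fin m × Fin n,
        ∫ ω, f' (fun l => ∑ j, v (j, l) * Φ j ω) ω p.2 q.2 * Φ p.1 ω * Φ q.1 ω * w q ∂μ := by
        refine Finset.sum_congr rfl fun q _ => ?_
        exact (integral_mul_const (w q) _).symm
    _ = ∫ ω, ∑ q : Fin m × Fin n,
        f' (fun l => ∑ j, v (j, l) * Φ j ω) ω p.2 q.2 * Φ p.1 ω * Φ q.1 ω * w q ∂μ :=
        (integral_finset_sum _ fun q _ => (heint p q).mul_const _).symm
    _ = ∫ ω, Fd v ω w p ∂μ := by
        refine integral_congr_ae (Filter.Eventually.of_forall fun ω => ?_)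
        exact (halg ω (f' (galA n m Φ ω v) ω) w p).symm
end
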